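/- Let R be an integral domain, and let x ∈ R be a nonzero non-unit. Then there do not exist polynomials a, b ∈ R[s] with b·(x + s) = a·s and a·R[s] + b·R[s] = R[s]. -/

import Mathlib

open Polynomial

/-- Let `R` be an integral domain and `x ∈ R` a nonzero non-unit. Then there are no
polynomials `a, b ∈ R[s]` with `b * (x + s) = a * s` and `(a, b) = R[s]`. -/
theorem stmt_3 (R : Type*) [CommRing R] [IsDomain R] (x : R) (hx : x ≠ 0)
    (hxu : ¬ IsUnit x) :
    ¬ ∃ a b : R[X], b * (C x + X) = a * X ∧ Ideal.span {a, b} = (⊤ : Ideal R[X]) := by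
  rintro ⟨a, b, heq, hspan⟩
  obtain ⟨u, v, huv⟩ := Ideal.mem_span_pair.mp (hspan ▸ Submodule.mem_top :
    (1 : R[X]) ∈ Ideal.span {a, b})
  have hb0 : b.eval 0 = 0 := by
    have h := congrArg (eval 0) heq
    simp only [eval_mul, eval_add, eval_C, eval_X, add_zero, mul_zero] at h
    exact (mul_eq_zero.mp h).resolve_right hx
  obtain ⟨c, hc⟩ : X ∣ b := X_dvd_iff.mpr (by rwa [coeff_zero_eq_eval_zero])
  have ha : a = c * (C x + X) := by
    have h : a * X = c * (C x + X) * X := by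
      rw [← heq, hc]; ring
    exact mul_right_cancel₀ X_ne_zero h
  apply hxu
  have h := congrArg (eval 0) huv
  simp only [ha, hc, eval_add, eval_mul, eval_C, eval_X, eval_one, add_zero,
    zero_mul, mul_zero] at h
  exact IsUnit.of_mul_eq_one (a := x) (u.eval 0 * c.eval 0) (by linear_combination h)
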